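/- Let κ be an uncountable cardinal, D a κ-complete filter on a set Y, f : Y → Ord, and suppose Y = ⋃_{α<α*} Y_α where α* is an ordinal with |α*| < κ. Then rk_D(f) = min{rk_{D+Y_α}(f) : α < α* and Y_α ∈ D⁺}. -/

import Mathlib

/-- `f <_D g` iff `{y | f y < g y} ∈ D`. -/
def ltD {Y : Type} (D : Filter Y) (f g : Y → Ordinal) : Prop :=
  {y | f y < g y} ∈ D

/-- The rank `rk_D f` of `f : Y → Ord` with respect to the (well-founded, for countably
complete `D`) relation `<_D`. -/
noncomputable def rkD {Y : Type} (D : Filter Y) (f : Y → Ordinal) : Ordinal.{1} :=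
  haveI := Classical.dec
  if h : Acc (ltD D) f then h.rank else 0

section aux

variable {Y : Type}

lemma ltD_wf {D : Filter Y} (hne : D.NeBot)
    (hcc : ∀ s : ℕ → Set Y, (∀ n, s n ∈ D) → (⋂ n, s n) ∈ D) :
    WellFounded (ltD.{0} D) := by
  haveI := hne
  haveI : IsIrrefl (Y → Ordinal.{0}) (ltD.{0} D) := by
    constructor
    intro f hf
    have he : {y | f y < f y} = (∅ : Set Y) := by ext y; simp
    exact Filter.empty_notMem D (he ▸ hf)
  haveI : IsTrans (Y → Ordinal.{0}) (ltD.{0} D) := by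
    constructor
    intro f g h h1 h2
    exact Filter.mem_of_superset (Filter.inter_mem h1 h2)
      fun y hy => show f y < h y from lt_trans hy.1 hy.2
  haveI : IsStrictOrder (Y → Ordinal.{0}) (ltD.{0} D) := ⟨⟩
  rw [RelEmbedding.wellFounded_iff_isEmpty]
  constructor
  intro e
  have hmem : ∀ n : ℕ, {y | e (n + 1) y < e n y} ∈ D := fun n =>
    e.map_rel_iff.mpr (Nat.lt_succ_self n)
  obtain ⟨y, hy⟩ := Filter.nonempty_of_mem (hcc _ hmem)
  rw [Set.mem_iInter] at hy
  have hdec : ∀ n, (fun n => e n y) (n + 1) < (fun n => e n y) n := fun n => hy n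
  exact (RelEmbedding.wellFounded_iff_isEmpty.mp Ordinal.lt_wf).false
    (RelEmbedding.natGT _ hdec)

lemma acc_rank_le_of_subrel {α : Type*} {r r' : α → α → Prop} (hsub : ∀ a b, r a b → r' a b) :
    ∀ {a : α} (h' : Acc r' a) (h : Acc r a), h.rank ≤ h'.rank := by
  intro a h'
  induction h' with
  | intro a ha IH =>
    intro h
    rw [h.rank_eq]
    apply Ordinal.iSup_le
    rintro ⟨b, hb⟩
    rw [Order.succ_le_iff]
    exact lt_of_le_of_lt (IH b (hsub b a hb) (h.inv hb))
      (Acc.rank_lt_of_rel (Acc.intro a ha) (hsub b a hb))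

lemma rank_le_of_le_mem {E : Filter Y} {g h : Y → Ordinal.{0}} (hgh : {y | g y ≤ h y} ∈ E)
    (hg : Acc (ltD.{0} E) g) (hh : Acc (ltD.{0} E) h) : hg.rank ≤ hh.rank := by
  rw [hg.rank_eq]
  apply Ordinal.iSup_le
  rintro ⟨g', hg'⟩
  rw [Order.succ_le_iff]
  have hrel : ltD.{0} E g' h :=
    Filter.mem_of_superset (Filter.inter_mem hg' hgh) fun y hy => show g' y < h y from lt_of_lt_of_le hy.1 hy.2
  exact Acc.rank_lt_of_rel hh hrel

lemma rank_eq_of_eq_mem {E : Filter Y} {g h : Y → Ordinal.{0}} (hgh : {y | g y = h y} ∈ E)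
    (hg : Acc (ltD.{0} E) g) (hh : Acc (ltD.{0} E) h) : hg.rank = hh.rank :=
  le_antisymm
    (rank_le_of_le_mem (Filter.mem_of_superset hgh fun y hy => le_of_eq hy) hg hh)
    (rank_le_of_le_mem (Filter.mem_of_superset hgh fun y hy => ge_of_eq hy) hh hg)

lemma exists_pred {E : Filter Y} {f : Y → Ordinal.{0}} (hf : Acc (ltD.{0} E) f) {ξ : Ordinal.{1}}
    (hξ : ξ < hf.rank) : ∃ g, ltD.{0} E g f ∧ ∀ hg : Acc (ltD.{0} E) g, ξ ≤ hg.rank := by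
  rw [hf.rank_eq, Ordinal.lt_iSup_iff] at hξ
  obtain ⟨⟨g, hrel⟩, hlt⟩ := hξ
  exact ⟨g, hrel, fun hg => Order.lt_succ_iff.mp hlt⟩

lemma rkD_eq_rank {E : Filter Y} (hwf : WellFounded (ltD.{0} E)) (f : Y → Ordinal.{0}) :
    rkD E f = (hwf.apply f).rank := by
  unfold rkD
  rw [dif_pos (hwf.apply f)]

lemma rkD_le_rkD {E E' : Filter Y} (hle : E' ≤ E) (hwfE : WellFounded (ltD.{0} E))
    (hwf' : WellFounded (ltD.{0} E')) (f : Y → Ordinal.{0}) : rkD E f ≤ rkD E' f := by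
  rw [rkD_eq_rank hwfE, rkD_eq_rank hwf']
  exact acc_rank_le_of_subrel (fun a b hab => hle hab) (hwf'.apply f) (hwfE.apply f)

lemma cc_of_hcomp {κ : Cardinal} (hκ : Cardinal.aleph0 < κ) {D : Filter Y}
    (hcomp : ∀ S : Set (Set Y), (∀ s ∈ S, s ∈ D) → Cardinal.mk S < κ → ⋂₀ S ∈ D)
    (s : ℕ → Set Y) (hs : ∀ n, s n ∈ D) : (⋂ n, s n) ∈ D := by
  rw [← Set.sInter_range]
  apply hcomp
  · rintro t ⟨n, rfl⟩; exact hs n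
  · exact lt_of_le_of_lt (Cardinal.mk_range_le.trans_eq Cardinal.mk_nat) hκ

lemma cc_inf {D : Filter Y} (hccD : ∀ s : ℕ → Set Y, (∀ n, s n ∈ D) → (⋂ n, s n) ∈ D)
    (Z : Set Y) (s : ℕ → Set Y) (hs : ∀ n, s n ∈ D ⊓ Filter.principal Z) :
    (⋂ n, s n) ∈ D ⊓ Filter.principal Z := by
  rw [Filter.mem_inf_principal]
  have h : ∀ n, {x | x ∈ Z → x ∈ s n} ∈ D := fun n => Filter.mem_inf_principal.mp (hs n)
  exact Filter.mem_of_superset (hccD _ h)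
    (fun y hy hz => Set.mem_iInter.mpr fun n => (Set.mem_iInter.mp hy n) hz)

lemma neBot_inf {D : Filter Y} {Z : Set Y} (hZ : Zᶜ ∉ D) :
    (D ⊓ Filter.principal Z).NeBot := by
  rw [Filter.neBot_iff]
  intro h
  apply hZ
  have hmem : (∅ : Set Y) ∈ D ⊓ Filter.principal Z := by rw [h]; exact Filter.mem_bot
  rw [Filter.mem_inf_principal] at hmem
  exact Filter.mem_of_superset hmem (fun y hy hz => hy hz)

lemma biInter_mem {κ : Cardinal} {D : Filter Y}
    (hcomp : ∀ S : Set (Set Y), (∀ s ∈ S, s ∈ D) → Cardinal.mk S < κ → ⋂₀ S ∈ D)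
    {αstar : Ordinal} (hαstar : αstar.card < κ)
    (g : Ordinal → Set Y) (hg : ∀ β < αstar, g β ∈ D) :
    (⋂ β ∈ Set.Iio αstar, g β) ∈ D := by
  have hs : (⋂ β ∈ Set.Iio αstar, g β) =
      ⋂₀ (Set.range fun x : αstar.ToType => g ((Ordinal.ToType.mk (o := αstar)).symm x : Ordinal)) := by
    rw [Set.sInter_range]
    ext y
    simp only [Set.mem_iInter, Set.mem_Iio]
    constructor
    · intro hy x
      exact hy _ ((Ordinal.ToType.mk (o := αstar)).symm x).2
    · intro hy β hβ
      have h2 := hy ((Ordinal.ToType.mk (o := αstar)) ⟨β, hβ⟩)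
      rwa [OrderIso.symm_apply_apply] at h2
  rw [hs]
  apply hcomp
  · rintro s ⟨x, rfl⟩
    exact hg _ ((Ordinal.ToType.mk (o := αstar)).symm x).2
  · exact lt_of_le_of_lt (Cardinal.mk_range_le.trans_eq (Cardinal.mk_toType αstar)) hαstar


lemma core {κ : Cardinal} (hκ : Cardinal.aleph0 < κ)
    {D : Filter Y} (hne : D.NeBot)
    (hcomp : ∀ S : Set (Set Y), (∀ s ∈ S, s ∈ D) → Cardinal.mk S < κ → ⋂₀ S ∈ D)
    {αstar : Ordinal.{0}} (hαstar : αstar.card < κ)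
    (idx : Y → Ordinal.{0}) (hidx : ∀ y, idx y < αstar) (f : Y → Ordinal.{0}) :
    ∃ β, β < αstar ∧ (idx ⁻¹' {β})ᶜ ∉ D ∧
      rkD (D ⊓ Filter.principal (idx ⁻¹' {β})) f ≤ rkD D f := by
  classical
  have hccD := cc_of_hcomp hκ hcomp
  have hwfD : WellFounded (ltD.{0} D) := ltD_wf hne hccD
  set P : Ordinal.{0} → Set Y := fun β => idx ⁻¹' {β} with hPdef
  have hW : (⋂ β ∈ Set.Iio αstar, (if (P β)ᶜ ∈ D then (P β)ᶜ else Set.univ)) ∈ D := by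
    apply biInter_mem hcomp hαstar
    intro β _
    split_ifs with h
    · exact h
    · exact Filter.univ_mem
  have hWidx : ∀ y ∈ (⋂ β ∈ Set.Iio αstar, (if (P β)ᶜ ∈ D then (P β)ᶜ else Set.univ)),
      (P (idx y))ᶜ ∉ D := by
    intro y hy hmem
    have h1 : y ∈ (if (P (idx y))ᶜ ∈ D then (P (idx y))ᶜ else Set.univ) :=
      Set.mem_iInter₂.mp hy (idx y) (hidx y)
    rw [if_pos hmem] at h1
    exact h1 rfl
  have hwfE : ∀ β : Ordinal.{0}, (P β)ᶜ ∉ D →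
      WellFounded (ltD.{0} (D ⊓ Filter.principal (P β))) :=
    fun β hβ => ltD_wf (neBot_inf hβ) (cc_inf hccD (P β))
  refine hwfD.induction (C := fun f => ∃ β, β < αstar ∧ (idx ⁻¹' {β})ᶜ ∉ D ∧
      rkD (D ⊓ Filter.principal (idx ⁻¹' {β})) f ≤ rkD D f) f ?_
  intro f IH
  by_contra hcon
  push_neg at hcon
  have hgex : ∀ β, β < αstar → (P β)ᶜ ∉ D →
      ∃ g, ltD.{0} (D ⊓ Filter.principal (P β)) g f ∧
        rkD D f ≤ rkD (D ⊓ Filter.principal (P β)) g := by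
    intro β hβ1 hβ2
    have hwf := hwfE β hβ2
    have hlt := hcon β hβ1 hβ2
    rw [rkD_eq_rank hwf f] at hlt
    obtain ⟨g, hrel, hrk⟩ := exists_pred (hwf.apply f) hlt
    exact ⟨g, hrel, by rw [rkD_eq_rank hwf g]; exact hrk _⟩
  choose! gfun hg1 hg2 using hgex
  set g : Y → Ordinal.{0} := fun y => if (P (idx y))ᶜ ∉ D then gfun (idx y) y else 0 with hgdef
  have hB : (⋂ β ∈ Set.Iio αstar,
      (if (P β)ᶜ ∉ D then {z | z ∈ P β → gfun β z < f z} else Set.univ)) ∈ D := by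
    apply biInter_mem hcomp hαstar
    intro β hβ
    by_cases h : (P β)ᶜ ∈ D
    · rw [if_neg (not_not_intro h)]
      exact Filter.univ_mem
    · rw [if_pos h]
      exact Filter.mem_inf_principal.mp (hg1 β hβ h)
  have hgf : ltD.{0} D g f := by
    refine Filter.mem_of_superset (Filter.inter_mem hW hB) ?_
    rintro y ⟨hyW, hyB⟩
    have hidxI : (P (idx y))ᶜ ∉ D := hWidx y hyW
    have h2 : y ∈ (if (P (idx y))ᶜ ∉ D then {z | z ∈ P (idx y) → gfun (idx y) z < f z}
        else Set.univ) := Set.mem_iInter₂.mp hyB (idx y) (hidx y)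
    rw [if_pos hidxI] at h2
    have h3 : gfun (idx y) y < f y := h2 rfl
    show g y < f y
    simp only [hgdef]
    rw [if_pos hidxI]
    exact h3
  obtain ⟨β, hβ1, hβ2, hβ3⟩ := IH g hgf
  have hwfβ := hwfE β hβ2
  have hlt : rkD D g < rkD D f := by
    rw [rkD_eq_rank hwfD g, rkD_eq_rank hwfD f]
    exact Acc.rank_lt_of_rel (hwfD.apply f) hgf
  have hPin : P β ∈ D ⊓ Filter.principal (P β) := by
    rw [Filter.mem_inf_principal]
    exact Filter.mem_of_superset Filter.univ_mem (fun y _ hy => hy)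
  have heq : rkD (D ⊓ Filter.principal (P β)) g
      = rkD (D ⊓ Filter.principal (P β)) (gfun β) := by
    rw [rkD_eq_rank hwfβ g, rkD_eq_rank hwfβ (gfun β)]
    apply rank_eq_of_eq_mem
    refine Filter.mem_of_superset hPin ?_
    intro y hy
    show g y = gfun β y
    have hidxy : idx y = β := hy
    simp only [hgdef]
    rw [hidxy, if_pos hβ2]
  have hge : rkD D f ≤ rkD (D ⊓ Filter.principal (P β)) (gfun β) := hg2 β hβ1 hβ2
  rw [← heq] at hge
  exact absurd (lt_of_le_of_lt (hge.trans hβ3) hlt) (lt_irrefl _)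

end aux

/-- if `κ` is an uncountable cardinal, `D` a `κ`-complete filter on `Y`
(i.e. `∅ ∉ D` and `D` is closed under intersections of fewer than `κ` of its members),
`f : Y → Ord`, and `Y = ⋃_{α < α*} Y_α` with `|α*| < κ`, then
`rk_D f = min{rk_{D+Y_α} f : α < α*, Y_α ∈ D⁺}`. -/
theorem stmt3 (κ : Cardinal) (hκ : Cardinal.aleph0 < κ) {Y : Type} [Nonempty Y]
    (D : Filter Y) (hne : D.NeBot)
    (hcomp : ∀ S : Set (Set Y), (∀ s ∈ S, s ∈ D) → Cardinal.mk S < κ → ⋂₀ S ∈ D)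
    (f : Y → Ordinal) (αstar : Ordinal) (hαstar : αstar.card < κ)
    (Yα : Ordinal → Set Y) (hcov : ⋃ β ∈ Set.Iio αstar, Yα β = Set.univ) :
    (∃ β < αstar, (Yα β)ᶜ ∉ D ∧ rkD D f = rkD (D ⊓ Filter.principal (Yα β)) f) ∧
      ∀ β < αstar, (Yα β)ᶜ ∉ D → rkD D f ≤ rkD (D ⊓ Filter.principal (Yα β)) f := by
  classical
  have hccD := cc_of_hcomp hκ hcomp
  have hwfD : WellFounded (ltD.{0} D) := ltD_wf hne hccD
  have part2 : ∀ β, β < αstar → (Yα β)ᶜ ∉ D →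
      rkD D f ≤ rkD (D ⊓ Filter.principal (Yα β)) f := by
    intro β hβ hcβ
    exact rkD_le_rkD inf_le_left hwfD (ltD_wf (neBot_inf hcβ) (cc_inf hccD (Yα β))) f
  refine ⟨?_, part2⟩
  have hne' : ∀ y : Y, {β : Ordinal.{0} | β < αstar ∧ y ∈ Yα β}.Nonempty := by
    intro y
    have hy : y ∈ ⋃ β ∈ Set.Iio αstar, Yα β := by rw [hcov]; trivial
    rw [Set.mem_iUnion₂] at hy
    obtain ⟨β, hβ, hyβ⟩ := hy
    exact ⟨β, hβ, hyβ⟩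
  set idx : Y → Ordinal.{0} := fun y => sInf {β | β < αstar ∧ y ∈ Yα β} with hidxdef
  have hidxmem : ∀ y, idx y < αstar ∧ y ∈ Yα (idx y) := fun y => csInf_mem (hne' y)
  obtain ⟨β, hβ1, hβ2, hβ3⟩ := core hκ hne hcomp hαstar idx (fun y => (hidxmem y).1) f
  have hsub : idx ⁻¹' {β} ⊆ Yα β := by
    intro y hy
    have h : idx y = β := hy
    rw [← h]; exact (hidxmem y).2
  have hYc : (Yα β)ᶜ ∉ D := fun h =>
    hβ2 (Filter.mem_of_superset h (Set.compl_subset_compl.mpr hsub))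
  refine ⟨β, hβ1, hYc, le_antisymm (part2 β hβ1 hYc) ?_⟩
  have h1 : rkD (D ⊓ Filter.principal (Yα β)) f
      ≤ rkD (D ⊓ Filter.principal (idx ⁻¹' {β})) f :=
    rkD_le_rkD (inf_le_inf_left D (Filter.principal_mono.mpr hsub))
      (ltD_wf (neBot_inf hYc) (cc_inf hccD _)) (ltD_wf (neBot_inf hβ2) (cc_inf hccD _)) f
  exact h1.trans hβ3
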